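/- Let F(x) = (α/N) x(x-1)[2u((-k+3-2/k)x - 1 + 1/k) + (λ+u)(k-1)] with α, N, u > 0, integer k ≥ 3, and let x̃ = λ/(2u(1-2/k)) + 1/2. If 0 < x̃ < 1, then F'(x̃) > 0; i.e., the interior equilibrium x̃ is never locally asymptotically stable when it lies in the open interval (0,1). -/

import Mathlib

/-- The interior equilibrium `x̃ = λ/(2u(1-2/k)) + 1/2` of the mean-field dynamics
is never locally asymptotically stable: if `0 < x̃ < 1` then `F'(x̃) > 0`. -/
theorem interior_equilibrium_unstable
    (α N u lam : ℝ) (hα : 0 < α) (hN : 0 < N) (hu : 0 < u)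
    (k : ℕ) (hk : 3 ≤ k)
    (F : ℝ → ℝ)
    (hF : F = fun x => (α / N) * x * (x - 1) *
      (2 * u * ((-(k : ℝ) + 3 - 2 / (k : ℝ)) * x - 1 + 1 / (k : ℝ))
        + (lam + u) * ((k : ℝ) - 1)))
    (xt : ℝ) (hxt : xt = lam / (2 * u * (1 - 2 / (k : ℝ))) + 1 / 2)
    (h0 : 0 < xt) (h1 : xt < 1) :
    0 < deriv F xt := by
  have hk3 : (3 : ℝ) ≤ (k : ℝ) := by exact_mod_cast hk
  have hkpos : (0 : ℝ) < (k : ℝ) := by linarith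
  have hkne : (k : ℝ) ≠ 0 := ne_of_gt hkpos
  set m : ℝ := -(k : ℝ) + 3 - 2 / (k : ℝ) with hm
  set c : ℝ := α / N with hc
  -- derivative of F at xt
  have hL : HasDerivAt (fun x : ℝ => 2 * u * (m * x - 1 + 1 / (k : ℝ))
      + (lam + u) * ((k : ℝ) - 1)) (2 * u * m) xt := by
    have h := ((((hasDerivAt_id xt).const_mul m).sub_const 1).add_const
      (1 / (k : ℝ))).const_mul (2 * u)
    have h2 := h.add_const ((lam + u) * ((k : ℝ) - 1))
    simpa [mul_comm, mul_assoc] using h2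
  have hquad : HasDerivAt (fun x : ℝ => c * x * (x - 1)) (c * (xt - 1) + c * xt) xt := by
    have h := ((hasDerivAt_id xt).const_mul c).mul ((hasDerivAt_id xt).sub_const 1)
    simpa [Pi.mul_def, mul_comm, mul_assoc, mul_add, add_comm] using h
  have hD : HasDerivAt F ((c * (xt - 1) + c * xt) *
      (2 * u * (m * xt - 1 + 1 / (k : ℝ)) + (lam + u) * ((k : ℝ) - 1))
      + (c * xt * (xt - 1)) * (2 * u * m)) xt := by
    rw [hF]
    exact hquad.mul hL
  rw [hD.deriv]
  -- the linear factor vanishes at xt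
  have hdenom : 2 * u * (1 - 2 / (k : ℝ)) ≠ 0 := by
    have : (0:ℝ) < 1 - 2 / (k : ℝ) := by
      rw [sub_pos, div_lt_one hkpos]; linarith
    positivity
  have hzero : 2 * u * (m * xt - 1 + 1 / (k : ℝ)) + (lam + u) * ((k : ℝ) - 1) = 0 := by
    have hne1 : (1:ℝ) - 2 / (k:ℝ) ≠ 0 := by
      have : 2 / (k:ℝ) < 1 := by rw [div_lt_one (by linarith)]; linarith
      linarith
    have hk2 : (k:ℝ) - 2 ≠ 0 := by intro h; nlinarith
    rw [hxt, hm]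
    field_simp [hne1, hk2, hu.ne']
    ring
  rw [hzero, mul_zero, zero_add]
  -- remaining term is positive
  have hcpos : 0 < c := div_pos hα hN
  have hmneg : m < 0 := by
    have h2k : 0 < 2 / (k : ℝ) := by positivity
    rw [hm]; linarith
  have hx : xt * (xt - 1) < 0 := mul_neg_of_pos_of_neg h0 (by linarith)
  have : c * xt * (xt - 1) < 0 := by
    have := mul_pos hcpos (neg_pos.mpr hx)
    nlinarith
  have h2um : 2 * u * m < 0 := by nlinarith
  exact mul_pos_of_neg_of_neg this h2um
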